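/- Let k be a field and a ∈ kˣ an element of infinite order in kˣ. Then the intersection of the intermediate fields k(x + 1/x) and k(x + a/x) of k(x)/k consists only of constants: k(x + 1/x) ∩ k(x + a/x) = k. -/

import Mathlib

open Polynomial

noncomputable section Statement7Aux

variable {k : Type*} [Field k]

/-- The fixed intermediate field of an algebra endomorphism of a field extension. -/
def fixedIF (f : RatFunc k →ₐ[k] RatFunc k) : IntermediateField k (RatFunc k) :=
  { AlgHom.equalizer f (AlgHom.id k (RatFunc k)) with
    inv_mem' := fun x hx => by
      have hx' : f x = x := hx
      show f x⁻¹ = x⁻¹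
      rw [map_inv₀, hx'] }

lemma mem_fixedIF {f : RatFunc k →ₐ[k] RatFunc k} {x : RatFunc k} :
    x ∈ fixedIF f ↔ f x = x := Iff.rfl

lemma fix_of_adjoin (f : RatFunc k →ₐ[k] RatFunc k) {u h : RatFunc k} (hu : f u = u)
    (hh : h ∈ IntermediateField.adjoin k {u}) : f h = h := by
  have hle : IntermediateField.adjoin k {u} ≤ fixedIF f := by
    rw [IntermediateField.adjoin_le_iff]
    intro x hx
    rw [Set.mem_singleton_iff] at hx
    subst hx
    exact hu
  exact hle hh

lemma transX : Transcendental k (RatFunc.X : RatFunc k) := by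
  rw [← RatFunc.algebraMap_X]
  exact (transcendental_algebraMap_iff (RatFunc.algebraMap_injective k)).2
    (Polynomial.transcendental_X k)

lemma transXinv : Transcendental k ((RatFunc.X : RatFunc k))⁻¹ := by
  intro h
  exact transX (by simpa using h.inv)

lemma transCXinv (c : k) (hc : c ≠ 0) :
    Transcendental k (algebraMap k (RatFunc k) c * (RatFunc.X)⁻¹) := by
  intro h
  apply transXinv (k := k)
  have hC : (algebraMap k (RatFunc k) c) ≠ 0 := fun h0 =>
    hc ((algebraMap k (RatFunc k)).injective (by rw [h0, map_zero]))
  have h2 : IsAlgebraic k (algebraMap k (RatFunc k) c⁻¹ *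
      (algebraMap k (RatFunc k) c * (RatFunc.X)⁻¹)) := by
    rw [isAlgebraic_iff_isIntegral] at h ⊢
    exact (isAlgebraic_iff_isIntegral.mp (isAlgebraic_algebraMap (c⁻¹ : k))).mul h
  have h3 : algebraMap k (RatFunc k) c⁻¹ *
      (algebraMap k (RatFunc k) c * (RatFunc.X)⁻¹) = (RatFunc.X : RatFunc k)⁻¹ := by
    rw [map_inv₀, inv_mul_cancel_left₀ hC]
  rwa [h3] at h2

/-- Lift evaluation at a transcendental element to an algebra endomorphism of `RatFunc k`. -/
def liftT (t : RatFunc k) (ht : Transcendental k t) : RatFunc k →ₐ[k] RatFunc k :=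
  RatFunc.liftAlgHom (Polynomial.aeval t)
    (nonZeroDivisors_le_comap_nonZeroDivisors_of_injective _
      (transcendental_iff_injective.mp ht))

lemma liftT_algebraMap (t : RatFunc k) (ht : Transcendental k t) (p : k[X]) :
    liftT t ht (algebraMap k[X] (RatFunc k) p) = Polynomial.aeval t p := by
  simpa [liftT] using RatFunc.liftAlgHom_apply_div (Polynomial.aeval t)
    (nonZeroDivisors_le_comap_nonZeroDivisors_of_injective _
      (transcendental_iff_injective.mp ht)) p 1

lemma liftT_X (t : RatFunc k) (ht : Transcendental k t) :
    liftT t ht RatFunc.X = t := by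
  rw [← RatFunc.algebraMap_X, liftT_algebraMap, Polynomial.aeval_X]

lemma algebraMap_eq_aeval (p : k[X]) :
    algebraMap k[X] (RatFunc k) p = Polynomial.aeval (RatFunc.X : RatFunc k) p := by
  rw [← RatFunc.algebraMap_X, Polynomial.aeval_algebraMap_apply, Polynomial.aeval_X_left_apply]

lemma algHom_algebraMap (f : RatFunc k →ₐ[k] RatFunc k) (p : k[X]) :
    f (algebraMap k[X] (RatFunc k) p) = Polynomial.aeval (f RatFunc.X) p := by
  rw [algebraMap_eq_aeval, Polynomial.aeval_algHom_apply]

lemma coeff_comp_C_mul_X (p : k[X]) (c : k) (i : ℕ) :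
    (p.comp (C c * X)).coeff i = c ^ i * p.coeff i := by
  induction p using Polynomial.induction_on' with
  | add p q hp hq => simp [add_comp, hp, hq, mul_add]
  | monomial n b =>
    rw [monomial_comp, mul_pow, ← C_pow, ← mul_assoc, mul_comm (C b) (C (c ^ n)), ← C_mul,
      coeff_C_mul, coeff_X_pow, coeff_monomial]
    by_cases h : i = n
    · subst h; simp [mul_comm]
    · simp [h, Ne.symm h]

lemma comp_C_mul_X_ne_zero {p : k[X]} (hp : p ≠ 0) {c : k} (hc : c ≠ 0) :
    p.comp (C c * X) ≠ 0 := by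
  intro h0
  apply hp
  ext i
  have := congrArg (fun r => Polynomial.coeff r i) h0
  simp only [coeff_comp_C_mul_X, coeff_zero] at this
  have hcz : c ^ i ≠ 0 := pow_ne_zero _ hc
  simpa [hcz] using this

lemma eq_monomial_of_rel (a : kˣ) (ha : ∀ n : ℕ, 0 < n → a ^ n ≠ 1)
    {p q : k[X]} (hcop : IsCoprime p q) (hp : p ≠ 0)
    (heq : p.comp (C (a : k) * X) * q = p * q.comp (C (a : k) * X)) :
    ∃ n c, p = monomial n c := by
  have ha0 : (a : k) ≠ 0 := a.ne_zero
  set f : k[X] := p.comp (C (a : k) * X) with hf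
  have hcop' : IsCoprime f (q.comp (C (a : k) * X)) := by
    have := hcop.map (Polynomial.aeval (C (a : k) * X) : k[X] →ₐ[k] k[X]).toRingHom
    simpa [hf, comp_eq_aeval] using this
  have hdvd : f ∣ p := hcop'.dvd_of_dvd_mul_right ⟨q, heq.symm⟩
  obtain ⟨r, hr⟩ := hdvd
  have hf0 : f ≠ 0 := comp_C_mul_X_ne_zero hp ha0
  have hr0 : r ≠ 0 := by
    intro h0; apply hp; rw [hr, h0, mul_zero]
  have hdeg : f.natDegree = p.natDegree := by
    rw [hf, natDegree_comp]
    have : (C (a : k) * X).natDegree = 1 := by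
      rw [natDegree_C_mul ha0, natDegree_X]
    rw [this, mul_one]
  have hrdeg : r.natDegree = 0 := by
    have := natDegree_mul hf0 hr0
    rw [← hr, hdeg] at this
    omega
  obtain ⟨c0, hc0⟩ := Polynomial.natDegree_eq_zero.mp hrdeg
  rw [← hc0] at hr
  have hcoeff : ∀ i, p.coeff i = (a : k) ^ i * p.coeff i * c0 := fun i => by
    conv_lhs => rw [hr]
    rw [coeff_mul_C, coeff_comp_C_mul_X]
  have hone : ∀ i ∈ p.support, (a : k) ^ i * c0 = 1 := by
    intro i hi
    have hne : p.coeff i ≠ 0 := Polynomial.mem_support_iff.mp hi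
    have := hcoeff i
    field_simp at this
    -- p.coeff i = a^i * p.coeff i * c0
    have h' : p.coeff i * 1 = p.coeff i * ((a : k) ^ i * c0) := by rw [← this]
    exact (mul_left_cancel₀ hne h').symm
  refine card_support_le_one_iff_monomial.mp ?_
  by_contra hcard
  push_neg at hcard
  obtain ⟨i, hi, j, hj, hij⟩ := Finset.one_lt_card.mp hcard
  have hc0ne : c0 ≠ 0 := by
    intro h0
    have := hone i hi
    rw [h0, mul_zero] at this
    exact one_ne_zero this.symm
  have hpow : (a : k) ^ i = (a : k) ^ j := by
    have h1 := hone i hi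
    have h2 := hone j hj
    have h3 : (a : k) ^ i * c0 = (a : k) ^ j * c0 := by rw [h1, h2]
    exact mul_right_cancel₀ hc0ne h3
  have hupow : a ^ i = a ^ j := Units.ext (by push_cast; exact hpow)
  rcases Nat.lt_or_ge i j with hlt | hge
  · apply ha (j - i) (by omega)
    have : a ^ (j - i) * a ^ i = a ^ i := by
      rw [← pow_add]
      rw [Nat.sub_add_cancel (le_of_lt hlt), ← hupow]
    exact mul_right_cancel (by rw [this, one_mul])
  · have hlt : j < i := by omega
    apply ha (i - j) (by omega)
    have : a ^ (i - j) * a ^ j = a ^ j := by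
      rw [← pow_add]
      rw [Nat.sub_add_cancel (le_of_lt hlt), hupow]
    exact mul_right_cancel (by rw [this, one_mul])

end Statement7Aux

/-- Let `k` be a field and `a ∈ kˣ` an element of infinite order in `kˣ`. Then the
intersection of the intermediate fields `k(x + 1/x)` and `k(x + a/x)` of `k(x)/k` consists
only of constants: `k(x + 1/x) ∩ k(x + a/x) = k`. -/
theorem statement7 (k : Type*) [Field k] (a : kˣ)
    (ha : ∀ n : ℕ, 0 < n → a ^ n ≠ 1) :
    IntermediateField.adjoin k {RatFunc.X + (RatFunc.X)⁻¹} ⊓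
      IntermediateField.adjoin k
        {RatFunc.X + algebraMap k (RatFunc k) (a : k) / RatFunc.X} = ⊥ := by
  classical
  set c : RatFunc k := algebraMap k (RatFunc k) (a : k) with hcdef
  have ha0 : (a : k) ≠ 0 := a.ne_zero
  have hc0 : c ≠ 0 := by simpa [hcdef] using ha0
  have hX0 : (RatFunc.X : RatFunc k) ≠ 0 := RatFunc.X_ne_zero
  set σ : RatFunc k →ₐ[k] RatFunc k := liftT (RatFunc.X)⁻¹ transXinv with hσdef
  set τ : RatFunc k →ₐ[k] RatFunc k := liftT (c * (RatFunc.X)⁻¹) (transCXinv _ ha0) with hτdef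
  have hσX : σ RatFunc.X = (RatFunc.X)⁻¹ := liftT_X _ _
  have hτX : τ RatFunc.X = c * (RatFunc.X)⁻¹ := liftT_X _ _
  have hσc : σ c = c := σ.commutes (a : k)
  have hτc : τ c = c := τ.commutes (a : k)
  have hσu : σ (RatFunc.X + (RatFunc.X)⁻¹) = RatFunc.X + (RatFunc.X)⁻¹ := by
    rw [map_add, map_inv₀, hσX, inv_inv, add_comm]
  have hτv : τ (RatFunc.X + c / RatFunc.X) = RatFunc.X + c / RatFunc.X := by
    rw [map_add, map_div₀, hτX, hτc]
    field_simp
    ring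
  rw [eq_bot_iff]
  intro h hmem
  rw [IntermediateField.mem_inf] at hmem
  obtain ⟨h1, h2⟩ := hmem
  have hσh : σ h = h := fix_of_adjoin σ hσu h1
  have hτh : τ h = h := fix_of_adjoin τ hτv h2
  rw [IntermediateField.mem_bot]
  by_cases h0 : h = 0
  · exact ⟨0, by simp [h0]⟩
  -- μ = σ ∘ τ sends X to c * X and fixes h
  set μ : RatFunc k →ₐ[k] RatFunc k := σ.comp τ with hμdef
  have hμX : μ RatFunc.X = c * RatFunc.X := by
    rw [hμdef, AlgHom.comp_apply, hτX, map_mul, hσc, map_inv₀, hσX, inv_inv]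
  have hμh : μ h = h := by rw [hμdef, AlgHom.comp_apply, hτh, hσh]
  set P : Polynomial k := h.num with hPdef
  set Q : Polynomial k := h.denom with hQdef
  have hP0 : P ≠ 0 := RatFunc.num_ne_zero h0
  have hQ0 : Q ≠ 0 := h.denom_ne_zero
  have hPQ : h = algebraMap (Polynomial k) (RatFunc k) P / algebraMap _ _ Q :=
    (RatFunc.num_div_denom h).symm
  have hcomp : ∀ p : Polynomial k,
      μ (algebraMap (Polynomial k) (RatFunc k) p) =
        algebraMap (Polynomial k) (RatFunc k) (p.comp (Polynomial.C (a : k) * Polynomial.X)) := by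
    intro p
    rw [algHom_algebraMap, hμX, algebraMap_eq_aeval, Polynomial.aeval_comp]
    congr 1
    rw [map_mul, Polynomial.aeval_C, Polynomial.aeval_X]
  have hQC0 : Q.comp (Polynomial.C (a : k) * Polynomial.X) ≠ 0 :=
    comp_C_mul_X_ne_zero hQ0 ha0
  have key : P.comp (Polynomial.C (a : k) * Polynomial.X) * Q =
      P * Q.comp (Polynomial.C (a : k) * Polynomial.X) := by
    have hQCne : (algebraMap (Polynomial k) (RatFunc k)) (Q.comp (Polynomial.C (a : k) * Polynomial.X)) ≠ 0 :=
      RatFunc.algebraMap_ne_zero hQC0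
    have hQne : (algebraMap (Polynomial k) (RatFunc k)) Q ≠ 0 := RatFunc.algebraMap_ne_zero hQ0
    have hthis : (algebraMap (Polynomial k) (RatFunc k)) (P.comp (Polynomial.C (a : k) * Polynomial.X)) /
        (algebraMap (Polynomial k) (RatFunc k)) (Q.comp (Polynomial.C (a : k) * Polynomial.X)) =
        (algebraMap (Polynomial k) (RatFunc k)) P / (algebraMap (Polynomial k) (RatFunc k)) Q := by
      rw [← hcomp P, ← hcomp Q, ← map_div₀, ← hPQ, hμh, hPQ]
    rw [div_eq_div_iff hQCne hQne] at hthis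
    apply RatFunc.algebraMap_injective k
    rw [map_mul, map_mul]
    exact hthis
  obtain ⟨d, pd, hPm⟩ := eq_monomial_of_rel a ha (RatFunc.isCoprime_num_denom h) hP0 key
  obtain ⟨e, qe, hQm⟩ := eq_monomial_of_rel a ha (RatFunc.isCoprime_num_denom h).symm hQ0
    (by linear_combination -key)
  rw [← hPdef] at hPm
  rw [← hQdef] at hQm
  have hpd : pd ≠ 0 := by
    intro hz; apply hP0; rw [hPm, hz, Polynomial.monomial_zero_right]
  have hqe : qe ≠ 0 := by
    intro hz; apply hQ0; rw [hQm, hz, Polynomial.monomial_zero_right]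
  -- Express h
  have hσalg : ∀ p : Polynomial k,
      σ (algebraMap (Polynomial k) (RatFunc k) p) =
        Polynomial.aeval ((RatFunc.X : RatFunc k))⁻¹ p := by
    intro p
    rw [algHom_algebraMap, hσX]
  set cp : RatFunc k := algebraMap k (RatFunc k) pd with hcp
  set cq : RatFunc k := algebraMap k (RatFunc k) qe with hcq
  have hcp0 : cp ≠ 0 := by simpa [hcp] using hpd
  have hcq0 : cq ≠ 0 := by simpa [hcq] using hqe
  have hh : h = cp * RatFunc.X ^ d / (cq * RatFunc.X ^ e) := by
    rw [hPQ, hPm, hQm, algebraMap_eq_aeval, algebraMap_eq_aeval,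
      Polynomial.aeval_monomial, Polynomial.aeval_monomial]
  have hσeq : cp * (RatFunc.X)⁻¹ ^ d / (cq * (RatFunc.X)⁻¹ ^ e) =
      cp * RatFunc.X ^ d / (cq * RatFunc.X ^ e) := by
    calc cp * (RatFunc.X)⁻¹ ^ d / (cq * (RatFunc.X)⁻¹ ^ e) = σ h := by
          conv_rhs => rw [hPQ]
          rw [map_div₀, hPm, hQm, hσalg, hσalg,
            Polynomial.aeval_monomial, Polynomial.aeval_monomial]
      _ = h := hσh
      _ = cp * RatFunc.X ^ d / (cq * RatFunc.X ^ e) := hh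
  have hde : d = e := by
    have h1 : (RatFunc.X : RatFunc k) ^ (e + e) = RatFunc.X ^ (d + d) := by
      have hXd : (RatFunc.X : RatFunc k) ^ d ≠ 0 := pow_ne_zero _ hX0
      have hXe : (RatFunc.X : RatFunc k) ^ e ≠ 0 := pow_ne_zero _ hX0
      field_simp at hσeq
      rw [one_div, inv_pow, inv_pow] at hσeq
      have hee : (RatFunc.X : RatFunc k) ^ e * RatFunc.X ^ e = RatFunc.X ^ d * RatFunc.X ^ d := by
        calc (RatFunc.X : RatFunc k) ^ e * RatFunc.X ^ e
            = ((RatFunc.X ^ d)⁻¹ * RatFunc.X ^ e) * (RatFunc.X ^ d * RatFunc.X ^ e) := by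
              rw [mul_mul_mul_comm, inv_mul_cancel₀ hXd, one_mul]
          _ = ((RatFunc.X ^ e)⁻¹ * RatFunc.X ^ d) * (RatFunc.X ^ d * RatFunc.X ^ e) := by
              rw [hσeq]
          _ = RatFunc.X ^ d * RatFunc.X ^ d := by
              rw [mul_comm (RatFunc.X ^ d) (RatFunc.X ^ e), mul_mul_mul_comm,
                inv_mul_cancel₀ hXe, one_mul]
      have h1' : (cp * cq) * (RatFunc.X ^ e * RatFunc.X ^ e) =
          (cp * cq) * (RatFunc.X ^ d * RatFunc.X ^ d) := by rw [hee]
      have h1'' := mul_left_cancel₀ (mul_ne_zero hcp0 hcq0) h1'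
      rw [pow_add, pow_add]
      exact h1''
    have h2 : (Polynomial.X : Polynomial k) ^ (e + e) = Polynomial.X ^ (d + d) := by
      apply RatFunc.algebraMap_injective k
      rw [map_pow, map_pow, RatFunc.algebraMap_X]
      exact h1
    have := congrArg Polynomial.natDegree h2
    simp [Polynomial.natDegree_X_pow] at this
    omega
  refine ⟨pd * qe⁻¹, ?_⟩
  rw [hh, hde]
  rw [map_mul, map_inv₀, ← hcp, ← hcq]
  field_simp
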